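/- Let $\mathcal{A}$ be a symmetric bilinear form on a $d$-dimensional real vector space $V$, let $v_1,\dots,v_d \in V$, and let $A$ be the $d\times d$ matrix $A_{ij} = \mathcal{A}(v_i,v_j)$. Then $\inf_{M \in \mathrm{SL}(d,\mathbb{R})} \left(\sum_{j_1,j_2=1}^d |(MAM^T)_{j_1 j_2}|^2\right)^{d/4} = d^{d/4} |\det A|^{1/2}$. -/

import Mathlib

open Matrix Real Finset

lemma symm_apply {d : ℕ} {S : Matrix (Fin d) (Fin d) ℝ} (hS : S.IsHermitian) (i j : Fin d) :
    S j i = S i j := by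
  conv_lhs => rw [← hS]
  simp [Matrix.conjTranspose_apply]

lemma frob_eq_sum_eig {d : ℕ} {S : Matrix (Fin d) (Fin d) ℝ} (hS : S.IsHermitian) :
    ∑ i, ∑ j, (S i j) ^ 2 = ∑ i, (hS.eigenvalues i) ^ 2 := by
  set U : Matrix (Fin d) (Fin d) ℝ := (hS.eigenvectorUnitary : Matrix (Fin d) (Fin d) ℝ) with hU
  have hdiag : star U * S * U = Matrix.diagonal hS.eigenvalues := by
    simpa [RCLike.ofReal_real_eq_id, Unitary.conjStarAlgAut_star_apply] using hS.conjStarAlgAut_star_eigenvectorUnitary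
  have hUU : U * star U = 1 := (Matrix.mem_unitaryGroup_iff).mp hS.eigenvectorUnitary.2
  have h1 : ∑ i, ∑ j, (S i j) ^ 2 = (S * S).trace := by
    simp only [Matrix.trace, Matrix.mul_apply, Matrix.diag, sq]
    rw [Finset.sum_comm]
    congr 1; ext i; congr 1; ext j
    rw [symm_apply hS]
  have h2 : (Matrix.diagonal hS.eigenvalues * Matrix.diagonal hS.eigenvalues).trace
      = (S * S).trace := by
    rw [← hdiag]
    have : star U * S * U * (star U * S * U) = star U * (S * S * U) := by
      calc star U * S * U * (star U * S * U) = star U * S * (U * star U) * S * U := by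
            simp only [Matrix.mul_assoc]
        _ = star U * (S * S * U) := by rw [hUU]; simp only [Matrix.mul_one, Matrix.mul_assoc]
    rw [this, Matrix.trace_mul_comm, Matrix.mul_assoc, hUU, Matrix.mul_one]
  rw [h1, ← h2]
  simp [Matrix.diagonal_mul_diagonal, Matrix.trace_diagonal, sq]

lemma lower_aux {d : ℕ} (hd : 0 < d) {S : Matrix (Fin d) (Fin d) ℝ} (hS : S.IsHermitian) :
    (d : ℝ) * |S.det| ^ ((2:ℝ)/d) ≤ ∑ i, ∑ j, (S i j) ^ 2 := by
  rw [frob_eq_sum_eig hS]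
  have hd' : (d : ℝ) ≠ 0 := Nat.cast_ne_zero.mpr hd.ne'
  have hdpos : (0:ℝ) < d := Nat.cast_pos.mpr hd
  have hdet : S.det = ∏ i, hS.eigenvalues i := by
    simpa using hS.det_eq_prod_eigenvalues
  have amgm := Real.geom_mean_le_arith_mean_weighted Finset.univ (fun _ => 1/(d:ℝ))
    (fun i => (hS.eigenvalues i)^2) (fun i _ => by positivity)
    (by simp [Finset.card_univ]; field_simp) (fun i _ => sq_nonneg _)
  have hL : ∏ i : Fin d, ((hS.eigenvalues i)^2) ^ ((1:ℝ)/d)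
      = |S.det| ^ ((2:ℝ)/d) := by
    rw [Real.finset_prod_rpow _ _ (fun i _ => sq_nonneg _)]
    rw [Finset.prod_pow, ← hdet, ← sq_abs, ← Real.rpow_natCast |S.det| 2,
      ← Real.rpow_mul (abs_nonneg _)]
    norm_num [div_eq_mul_inv]
  rw [hL] at amgm
  calc (d : ℝ) * |S.det| ^ ((2:ℝ)/d)
      ≤ (d:ℝ) * ∑ i : Fin d, (1/(d:ℝ)) * (hS.eigenvalues i)^2 :=
        mul_le_mul_of_nonneg_left amgm (le_of_lt hdpos)
    _ = ∑ i, (hS.eigenvalues i)^2 := by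
        rw [← Finset.mul_sum, ← mul_assoc]; field_simp

lemma diag_sq_sum {d : ℕ} (w : Fin d → ℝ) :
    ∑ i, ∑ j, (Matrix.diagonal w i j) ^ 2 = ∑ i, w i ^ 2 := by
  refine Finset.sum_congr rfl fun i _ => ?_
  rw [Finset.sum_eq_single i]
  · simp
  · intro j _ hj; simp [Matrix.diagonal_apply, (Ne.symm hj)]
  · simp

lemma constr {d : ℕ} (hd : 0 < d) {A : Matrix (Fin d) (Fin d) ℝ} (hA : A.IsHermitian)
    (s : Fin d → ℝ) (hs : |∏ i, s i| = 1) :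
    ∃ M : Matrix.SpecialLinearGroup (Fin d) ℝ,
      (M : Matrix (Fin d) (Fin d) ℝ) * A * (M : Matrix (Fin d) (Fin d) ℝ).transpose
        = Matrix.diagonal (fun i => s i ^ 2 * hA.eigenvalues i) := by
  set U : Matrix (Fin d) (Fin d) ℝ := (hA.eigenvectorUnitary : Matrix (Fin d) (Fin d) ℝ) with hU
  have hstar : star U = U.transpose := by
    ext i j; simp [Matrix.conjTranspose_apply]
  have hdiag : U.transpose * A * U = Matrix.diagonal hA.eigenvalues := by
    rw [← hstar]
    simpa [RCLike.ofReal_real_eq_id, Unitary.conjStarAlgAut_star_apply] using hA.conjStarAlgAut_star_eigenvectorUnitary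
  have hUU : star U * U = 1 := (Matrix.mem_unitaryGroup_iff').mp hA.eigenvectorUnitary.2
  have hdetU : U.det ^ 2 = 1 := by
    have := congrArg Matrix.det hUU
    rw [Matrix.det_mul, hstar, Matrix.det_transpose, Matrix.det_one] at this
    rw [sq]; exact this
  set i0 : Fin d := ⟨0, hd⟩
  set ε : ℝ := U.det * ∏ i, s i with hε
  have hε2 : ε ^ 2 = 1 := by
    rw [hε, mul_pow, hdetU, one_mul, ← sq_abs, hs, one_pow]
  set t : Fin d → ℝ := Function.update s i0 (ε * s i0) with ht
  have hts : ∀ i, t i ^ 2 = s i ^ 2 := by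
    intro i
    by_cases h : i = i0
    · subst h; rw [ht]; simp [mul_pow, hε2]
    · rw [ht]; simp [Function.update_of_ne h]
  have hprodt : ∏ i, t i = ε * ∏ i, s i := by
    rw [ht, Finset.prod_update_of_mem (Finset.mem_univ i0),
      Finset.sdiff_singleton_eq_erase, mul_assoc,
      ← Finset.mul_prod_erase Finset.univ s (Finset.mem_univ i0)]
  have hdetM : (Matrix.diagonal t * U.transpose).det = 1 := by
    rw [Matrix.det_mul, Matrix.det_diagonal, Matrix.det_transpose, hprodt, hε]
    ring_nf
    rw [hdetU, one_mul, ← sq_abs (∏ i, s i), hs, one_pow]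
  refine ⟨⟨Matrix.diagonal t * U.transpose, hdetM⟩, ?_⟩
  show (Matrix.diagonal t * U.transpose) * A * (Matrix.diagonal t * U.transpose).transpose
      = Matrix.diagonal fun i => s i ^ 2 * hA.eigenvalues i
  have : (Matrix.diagonal t * U.transpose) * A * (Matrix.diagonal t * U.transpose).transpose
      = Matrix.diagonal t * (U.transpose * A * U) * Matrix.diagonal t := by
    rw [Matrix.transpose_mul, Matrix.transpose_transpose, Matrix.diagonal_transpose]
    simp only [Matrix.mul_assoc]
  rw [this, hdiag, Matrix.diagonal_mul_diagonal, Matrix.diagonal_mul_diagonal]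
  ext i j
  rcases eq_or_ne i j with rfl | h
  · simp only [Matrix.diagonal_apply_eq]
    rw [← hts i]; ring
  · simp [Matrix.diagonal_apply_ne _ h]

lemma rhs_eq {d : ℕ} (hd : 0 < d) (x : ℝ) :
    ((d:ℝ) * |x| ^ ((2:ℝ)/d)) ^ ((d:ℝ)/4) = (d:ℝ) ^ ((d:ℝ)/4) * |x| ^ ((1:ℝ)/2) := by
  have hd' : (d : ℝ) ≠ 0 := Nat.cast_ne_zero.mpr hd.ne'
  rw [Real.mul_rpow (by positivity) (by positivity), ← Real.rpow_mul (abs_nonneg x)]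
  congr 1
  field_simp
  ring

lemma helper1 (c0 x : ℝ) (hx : x ≠ 0) :
    ((c0 * |x| ^ (-(1:ℝ)/2)) ^ 2 * x) ^ 2 = c0 ^ 4 := by
  have hax : (0:ℝ) < |x| := abs_pos.mpr hx
  have h2 : (|x| ^ (-(1:ℝ)/2)) ^ 2 = |x|⁻¹ := by
    rw [← Real.rpow_natCast (|x| ^ (-(1:ℝ)/2)) 2, ← Real.rpow_mul hax.le]
    norm_num [Real.rpow_neg_one]
  have h3 : ((c0 * |x| ^ (-(1:ℝ)/2)) ^ 2 * x) ^ 2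
      = c0 ^ 4 * ((|x| ^ (-(1:ℝ)/2)) ^ 2) ^ 2 * x ^ 2 := by ring
  rw [h3, h2, ← sq_abs x]
  field_simp

theorem stmt7 (d : ℕ) (hd : 0 < d) (V : Type*) [AddCommGroup V] [Module ℝ V]
    [FiniteDimensional ℝ V] (hdim : Module.finrank ℝ V = d)
    (B : LinearMap.BilinForm ℝ V) (hB : B.IsSymm)
    (v : Fin d → V) (A : Matrix (Fin d) (Fin d) ℝ) (hA : ∀ i j, A i j = B (v i) (v j)) :
    (⨅ M : Matrix.SpecialLinearGroup (Fin d) ℝ,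
        (∑ j₁ : Fin d, ∑ j₂ : Fin d,
          (((M : Matrix (Fin d) (Fin d) ℝ) * A *
              (M : Matrix (Fin d) (Fin d) ℝ).transpose) j₁ j₂) ^ 2) ^ ((d : ℝ) / 4))
      = (d : ℝ) ^ ((d : ℝ) / 4) * |A.det| ^ ((1 : ℝ) / 2) := by
  classical
  have hd' : (d : ℝ) ≠ 0 := Nat.cast_ne_zero.mpr hd.ne'
  have hAh : A.IsHermitian := by
    ext i j
    simp only [Matrix.conjTranspose_apply, star_trivial]
    rw [hA, hA, ← hB.eq]
  haveI : Nonempty (Matrix.SpecialLinearGroup (Fin d) ℝ) := ⟨1⟩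
  set G : Matrix.SpecialLinearGroup (Fin d) ℝ → ℝ := fun M =>
    (∑ j₁ : Fin d, ∑ j₂ : Fin d,
      (((M : Matrix (Fin d) (Fin d) ℝ) * A *
          (M : Matrix (Fin d) (Fin d) ℝ).transpose) j₁ j₂) ^ 2) ^ ((d : ℝ) / 4) with hG
  have hGnn : ∀ M, 0 ≤ G M := fun M =>
    Real.rpow_nonneg (Finset.sum_nonneg fun _ _ =>
      Finset.sum_nonneg fun _ _ => sq_nonneg _) _
  have hbdd : BddBelow (Set.range G) := ⟨0, by rintro x ⟨M, rfl⟩; exact hGnn M⟩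
  have hlamprod : ∏ i, hAh.eigenvalues i = A.det := by
    simpa using hAh.det_eq_prod_eigenvalues.symm
  have hlow : ∀ M, (d:ℝ) ^ ((d:ℝ)/4) * |A.det| ^ ((1:ℝ)/2) ≤ G M := by
    intro M
    have hSh : ((M : Matrix (Fin d) (Fin d) ℝ) * A *
        (M : Matrix (Fin d) (Fin d) ℝ).transpose).IsHermitian := by
      rw [← Matrix.conjTranspose_eq_transpose_of_trivial]
      exact Matrix.isHermitian_mul_mul_conjTranspose _ hAh
    have hdetS : ((M : Matrix (Fin d) (Fin d) ℝ) * A *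
        (M : Matrix (Fin d) (Fin d) ℝ).transpose).det = A.det := by
      rw [Matrix.det_mul, Matrix.det_mul, Matrix.det_transpose,
        Matrix.SpecialLinearGroup.det_coe]
      ring
    have hl := lower_aux hd hSh
    rw [hdetS] at hl
    calc (d:ℝ) ^ ((d:ℝ)/4) * |A.det| ^ ((1:ℝ)/2)
        = ((d:ℝ) * |A.det| ^ ((2:ℝ)/d)) ^ ((d:ℝ)/4) := (rhs_eq hd _).symm
      _ ≤ G M := Real.rpow_le_rpow (by positivity) hl (by positivity)
  refine le_antisymm ?_ (le_ciInf hlow)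
  by_cases hdet : A.det = 0
  · rw [hdet, abs_zero, Real.zero_rpow (by norm_num), mul_zero]
    refine le_of_forall_pos_le_add fun ε hε => ?_
    rw [zero_add]
    obtain ⟨k, -, hk⟩ : ∃ k ∈ Finset.univ, hAh.eigenvalues k = 0 :=
      Finset.prod_eq_zero_iff.mp (by rw [hlamprod, hdet])
    set C : ℝ := ∑ i, (hAh.eigenvalues i) ^ 2 with hC
    have hCnn : 0 ≤ C := Finset.sum_nonneg fun _ _ => sq_nonneg _
    set t : ℝ := min 1 (ε / (C ^ ((d:ℝ)/4) + 1)) with htdef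
    have ht0 : 0 < t := lt_min one_pos (by positivity)
    have ht1 : t ≤ 1 := min_le_left _ _
    set s : Fin d → ℝ := fun i => if i = k then (t ^ (d-1))⁻¹ else t with hsdef
    have hprod : |∏ i, s i| = 1 := by
      have : ∏ i, s i = 1 := by
        rw [← Finset.mul_prod_erase Finset.univ s (Finset.mem_univ k)]
        have h1 : s k = (t ^ (d-1))⁻¹ := by simp [hsdef]
        have h2 : ∏ i ∈ Finset.univ.erase k, s i = t ^ (d-1) := by
          rw [Finset.prod_congr rfl (fun i hi => ?_), Finset.prod_const,
            Finset.card_erase_of_mem (Finset.mem_univ k), Finset.card_univ,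
            Fintype.card_fin]
          simp [hsdef, Finset.ne_of_mem_erase hi]
        rw [h1, h2, inv_mul_cancel₀ (pow_ne_zero _ ht0.ne')]
      rw [this, abs_one]
    obtain ⟨M, hM⟩ := constr hd hAh s hprod
    have hsum : ∑ i, (s i ^ 2 * hAh.eigenvalues i) ^ 2 ≤ t ^ 4 * C := by
      rw [hC, Finset.mul_sum]
      refine Finset.sum_le_sum fun i _ => ?_
      by_cases h : i = k
      · subst h; rw [hk]; simpa using by positivity
      · have : s i = t := by simp [hsdef, h]
        rw [this]
        exact le_of_eq (by ring)
    have hGM : G M ≤ ε := by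
      have hGMeq : G M = (∑ i, (s i ^ 2 * hAh.eigenvalues i) ^ 2) ^ ((d:ℝ)/4) := by
        rw [hG]
        simp only
        rw [hM, diag_sq_sum]
      rw [hGMeq]
      have hsnn : 0 ≤ ∑ i, (s i ^ 2 * hAh.eigenvalues i) ^ 2 :=
        Finset.sum_nonneg fun _ _ => sq_nonneg _
      calc (∑ i, (s i ^ 2 * hAh.eigenvalues i) ^ 2) ^ ((d:ℝ)/4)
          ≤ (t ^ 4 * C) ^ ((d:ℝ)/4) :=
            Real.rpow_le_rpow hsnn hsum (by positivity)
        _ = (t ^ 4) ^ ((d:ℝ)/4) * C ^ ((d:ℝ)/4) :=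
            Real.mul_rpow (by positivity) hCnn
        _ = t ^ (d:ℕ) * C ^ ((d:ℝ)/4) := by
            rw [← Real.rpow_natCast t 4, ← Real.rpow_mul ht0.le,
              show (4:ℕ) * ((d:ℝ)/4) = (d:ℝ) by push_cast; ring, Real.rpow_natCast]
        _ ≤ t * C ^ ((d:ℝ)/4) := by
            refine mul_le_mul_of_nonneg_right ?_ (by positivity)
            exact pow_le_of_le_one ht0.le ht1 hd.ne'
        _ ≤ (ε / (C ^ ((d:ℝ)/4) + 1)) * C ^ ((d:ℝ)/4) :=
            mul_le_mul_of_nonneg_right (min_le_right _ _) (by positivity)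
        _ ≤ ε := by
            rw [div_mul_eq_mul_div, div_le_iff₀ (by positivity)]
            nlinarith [Real.rpow_nonneg hCnn ((d:ℝ)/4), hε.le]
    exact (ciInf_le hbdd M).trans hGM
  · have habs : (0:ℝ) < |A.det| := abs_pos.mpr hdet
    have hlamne : ∀ i, hAh.eigenvalues i ≠ 0 := by
      intro i hi
      exact hdet (by rw [← hlamprod]; exact Finset.prod_eq_zero (Finset.mem_univ i) hi)
    set c0 : ℝ := |A.det| ^ ((1:ℝ)/(2*d)) with hc0def
    have hc0 : 0 < c0 := Real.rpow_pos_of_pos habs _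
    set s : Fin d → ℝ := fun i => c0 * |hAh.eigenvalues i| ^ (-(1:ℝ)/2) with hsdef
    have hprod : |∏ i, s i| = 1 := by
      have h1 : ∏ i, s i = c0 ^ (d:ℕ) * (∏ i, |hAh.eigenvalues i|) ^ (-(1:ℝ)/2) := by
        rw [hsdef, Finset.prod_mul_distrib, Finset.prod_const, Finset.card_univ,
          Fintype.card_fin, Real.finset_prod_rpow _ _ (fun i _ => abs_nonneg _)]
      have h2 : ∏ i, |hAh.eigenvalues i| = |A.det| := by
        rw [← Finset.abs_prod, hlamprod]
      have h3 : c0 ^ (d:ℕ) = |A.det| ^ ((1:ℝ)/2) := by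
        rw [hc0def, ← Real.rpow_natCast (|A.det| ^ ((1:ℝ)/(2*d))) d,
          ← Real.rpow_mul habs.le]
        congr 1
        field_simp
      rw [h1, h2, h3, ← Real.rpow_add habs]
      norm_num
    obtain ⟨M, hM⟩ := constr hd hAh s hprod
    have hval : ∀ i, (s i ^ 2 * hAh.eigenvalues i) ^ 2 = c0 ^ 4 := fun i =>
      helper1 c0 _ (hlamne i)
    have hc04 : c0 ^ 4 = |A.det| ^ ((2:ℝ)/d) := by
      rw [hc0def, ← Real.rpow_natCast (|A.det| ^ ((1:ℝ)/(2*d))) 4,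
        ← Real.rpow_mul habs.le]
      congr 1
      field_simp
      ring
    have hGMeq : G M = (d:ℝ) ^ ((d:ℝ)/4) * |A.det| ^ ((1:ℝ)/2) := by
      rw [hG]
      simp only
      rw [hM, diag_sq_sum]
      rw [Finset.sum_congr rfl (fun i _ => hval i), Finset.sum_const, Finset.card_univ,
        Fintype.card_fin, nsmul_eq_mul, hc04, rhs_eq hd]
    exact (ciInf_le hbdd M).trans hGMeq.le
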